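/- Let N be a natural number, C an integer with 1 ≤ C ≤ N−1, ν ∈ (0,1), μ = 1 − ν, and α > 0. Set b = ν ∫₀¹ (1−u)^{C} (1 + (ν/μ)u)^{N−C−1} u^{α} du and d = μ ∫₀¹ (1−u)^{N−C−1} (1 + (μ/ν)u)^{C} u^{α} du, and define g(x,t) = d·e^{−αt} ∫₀¹ (1−u)^x (1+(ν/μ)u)^{N−x} u^{α−1} du + b·e^{−αt} ∫₀¹ (1−u)^{N−x} (1+(μ/ν)u)^{x} u^{α−1} du for integers 0 ≤ x ≤ C and t ∈ ℝ. Then for every integer 1 ≤ x ≤ C and every t ∈ ℝ, (∂/∂t) g(x,t) + μ·x·(g(x−1,t) − g(x,t)) + 𝟙_{x<C}·ν·(N−x)·(g(x+1,t) − g(x,t)) = 0. -/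

import Mathlib

open Filter Topology MeasureTheory

noncomputable def Aint (c α : ℝ) (p q : ℕ) : ℝ :=
  ∫ u in Set.Ioo (0:ℝ) 1, (1 - u) ^ p * (1 + c * u) ^ q * u ^ (α - 1)

noncomputable def Bint (c α : ℝ) (p q : ℕ) : ℝ :=
  ∫ u in Set.Ioo (0:ℝ) 1, (1 - u) ^ p * (1 + c * u) ^ q * u ^ α

lemma int_poly (p q : ℕ) (c β : ℝ) (hβ : -1 < β) :
    IntegrableOn (fun u : ℝ => (1 - u) ^ p * (1 + c * u) ^ q * u ^ β)
      (Set.Ioo (0:ℝ) 1) := by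
  have h1 : IntervalIntegrable (fun u : ℝ => u ^ β) volume 0 1 :=
    intervalIntegral.intervalIntegrable_rpow' hβ
  have h2 : IntervalIntegrable
      (fun u : ℝ => (1 - u) ^ p * (1 + c * u) ^ q * u ^ β) volume 0 1 := by
    have hc : ContinuousOn (fun u : ℝ => (1 - u) ^ p * (1 + c * u) ^ q)
        (Set.uIcc (0:ℝ) 1) := (by continuity : Continuous _).continuousOn
    simpa [mul_assoc] using h1.continuousOn_mul hc
  rw [intervalIntegrable_iff_integrableOn_Ioo_of_le (by norm_num)] at h2
  exact h2

lemma key_ibp (p q : ℕ) (c α : ℝ) (hα : 0 < α) :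
    α * Aint c α (p+1) (q+1)
      = ((p:ℝ)+1) * Bint c α p (q+1) - c * ((q:ℝ)+1) * Bint c α (p+1) q := by
  set f : ℝ → ℝ := fun u =>
    -(((p:ℝ)+1)) * ((1-u)^p * (1+c*u)^(q+1) * u^α)
    + c*((q:ℝ)+1) * ((1-u)^(p+1) * (1+c*u)^q * u^α)
    + α * ((1-u)^(p+1) * (1+c*u)^(q+1) * u^(α-1)) with hf
  set F : ℝ → ℝ := fun u => (1-u)^(p+1) * (1+c*u)^(q+1) * u^α with hF
  have hcont : ContinuousOn F (Set.Icc 0 1) := by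
    apply ContinuousOn.mul
    · exact (by continuity : Continuous fun u : ℝ => (1-u)^(p+1) * (1+c*u)^(q+1)).continuousOn
    · intro u _
      exact (Real.continuousAt_rpow_const u α (Or.inr hα.le)).continuousWithinAt
  have hderivF : ∀ u ∈ Set.Ioo (0:ℝ) 1, HasDerivAt F (f u) u := by
    intro u hu
    have h0 : HasDerivAt (fun u : ℝ => 1 - u) (-1) u := (hasDerivAt_id u).const_sub 1
    have h1 : HasDerivAt (fun u : ℝ => (1-u)^(p+1)) ((↑(p+1) * (1-u)^p) * (-1)) u := by
      simpa using h0.fun_pow (p+1)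
    have h0' : HasDerivAt (fun u : ℝ => 1 + c*u) c u := by
      simpa using ((hasDerivAt_id u).const_mul c).const_add 1
    have h2 : HasDerivAt (fun u : ℝ => (1+c*u)^(q+1)) ((↑(q+1) * (1+c*u)^q) * c) u := by
      simpa using h0'.fun_pow (q+1)
    have h3 : HasDerivAt (fun u : ℝ => u ^ α) (α * u^(α-1)) u :=
      Real.hasDerivAt_rpow_const (Or.inl (ne_of_gt hu.1))
    have h4 := (h1.fun_mul h2).fun_mul h3
    convert h4 using 1 <;> try rfl
    show f u = _
    simp only [hf]
    push_cast
    ring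
  have hint1 := int_poly p (q+1) c α (by linarith)
  have hint2 := int_poly (p+1) q c α (by linarith)
  have hint3 := int_poly (p+1) (q+1) c (α-1) (by linarith)
  have hfint : IntegrableOn f (Set.Ioo (0:ℝ) 1) :=
    ((hint1.const_mul _).add (hint2.const_mul _)).add (hint3.const_mul _)
  have hfi : IntervalIntegrable f volume 0 1 := by
    rw [intervalIntegrable_iff_integrableOn_Ioo_of_le (by norm_num)]
    exact hfint
  have hFTC := intervalIntegral.integral_eq_sub_of_hasDeriv_right_of_le (by norm_num)
    hcont (fun u hu => (hderivF u hu).hasDerivWithinAt) hfi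
  have hF1 : F 1 = 0 := by simp [hF, zero_pow (Nat.succ_ne_zero p)]
  have hF0 : F 0 = 0 := by simp [hF, Real.zero_rpow hα.ne']
  have h0 : ∫ u in Set.Ioo (0:ℝ) 1, f u = 0 := by
    rw [← integral_Ioc_eq_integral_Ioo,
      ← intervalIntegral.integral_of_le (by norm_num : (0:ℝ) ≤ 1), hFTC, hF1, hF0, sub_zero]
  have hsplit : ∫ u in Set.Ioo (0:ℝ) 1, f u
      = -(((p:ℝ)+1)) * Bint c α p (q+1) + c*((q:ℝ)+1) * Bint c α (p+1) q
        + α * Aint c α (p+1) (q+1) := by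
    have e1 : IntegrableOn (fun u : ℝ =>
        -(((p:ℝ)+1)) * ((1-u)^p * (1+c*u)^(q+1) * u^α)) (Set.Ioo (0:ℝ) 1) :=
      hint1.const_mul _
    have e2 : IntegrableOn (fun u : ℝ =>
        c*((q:ℝ)+1) * ((1-u)^(p+1) * (1+c*u)^q * u^α)) (Set.Ioo (0:ℝ) 1) :=
      hint2.const_mul _
    have e3 : IntegrableOn (fun u : ℝ =>
        α * ((1-u)^(p+1) * (1+c*u)^(q+1) * u^(α-1))) (Set.Ioo (0:ℝ) 1) :=
      hint3.const_mul _
    have e12 : IntegrableOn (fun u : ℝ =>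
        -(((p:ℝ)+1)) * ((1-u)^p * (1+c*u)^(q+1) * u^α)
          + c*((q:ℝ)+1) * ((1-u)^(p+1) * (1+c*u)^q * u^α)) (Set.Ioo (0:ℝ) 1) :=
      e1.add e2
    simp only [hf]
    rw [integral_add e12 e3, integral_add e1 e2,
      integral_const_mul, integral_const_mul, integral_const_mul]
    rfl
  rw [hsplit] at h0
  linarith

lemma diff_up (c α : ℝ) (hα : 0 < α) (p q : ℕ) :
    Aint c α p (q+1) - Aint c α (p+1) q = (1 + c) * Bint c α p q := by
  unfold Aint Bint
  rw [← integral_sub (int_poly p (q+1) c (α-1) (by linarith))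
      (int_poly (p+1) q c (α-1) (by linarith)), ← integral_const_mul]
  refine setIntegral_congr_fun measurableSet_Ioo fun u hu => ?_
  have hu0 : (0:ℝ) < u := hu.1
  have h : u ^ (α-1) * u = u ^ α := by
    rw [← Real.rpow_add_one hu0.ne' (α-1)]
    norm_num
  rw [← h]
  ring

lemma gen_rel (a b : ℕ) (c α μ ν : ℝ) (hα : 0 < α)
    (h1 : μ * (1 + c) = 1) (h2 : ν = c * μ) :
    -α * Aint c α (a+1) (b+1)
      + μ * ((a:ℝ)+1) * (Aint c α a (b+2) - Aint c α (a+1) (b+1))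
      + ν * ((b:ℝ)+1) * (Aint c α (a+2) b - Aint c α (a+1) (b+1)) = 0 := by
  have k := key_ibp a b c α hα
  have d1 := diff_up c α hα a (b+1)
  have d2 := diff_up c α hα (a+1) b
  linear_combination (-1:ℝ) * k + μ*((a:ℝ)+1)*d1 - ν*((b:ℝ)+1)*d2
    + (((a:ℝ)+1)*Bint c α a (b+1) - c*((b:ℝ)+1)*Bint c α (a+1) b)*h1
    - (1+c)*((b:ℝ)+1)*Bint c α (a+1) b * h2

/-- The combination `g = d·I_α + b·J_α` is space-time harmonic for the Engset generator
(with reflection at `C`) at every state `1 ≤ x ≤ C`, including the boundary `C`. -/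
theorem engset_Kalpha_harmonic
    (N C : ℕ) (hC1 : 1 ≤ C) (hCN : C + 1 ≤ N)
    (ν μ : ℝ) (hν : ν ∈ Set.Ioo (0:ℝ) 1) (hμ : μ = 1 - ν)
    (α : ℝ) (hα : 0 < α) (b d : ℝ)
    (hb : b = ν * ∫ u in Set.Ioo (0:ℝ) 1,
        (1 - u) ^ C * (1 + (ν / μ) * u) ^ (N - C - 1) * u ^ α)
    (hd : d = μ * ∫ u in Set.Ioo (0:ℝ) 1,
        (1 - u) ^ (N - C - 1) * (1 + (μ / ν) * u) ^ C * u ^ α)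
    (g : ℕ → ℝ → ℝ)
    (hg : ∀ (x : ℕ) (t : ℝ),
      g x t = d * (Real.exp (-α * t) *
          ∫ u in Set.Ioo (0:ℝ) 1,
            (1 - u) ^ x * (1 + (ν / μ) * u) ^ (N - x) * u ^ (α - 1))
        + b * (Real.exp (-α * t) *
          ∫ u in Set.Ioo (0:ℝ) 1,
            (1 - u) ^ (N - x) * (1 + (μ / ν) * u) ^ x * u ^ (α - 1))) :
    ∀ (x : ℕ), 1 ≤ x → x ≤ C → ∀ t : ℝ,
      deriv (g x) t
        + μ * x * (g (x - 1) t - g x t)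
        + (if x < C then (1:ℝ) else 0) * (ν * ((N : ℝ) - x) * (g (x + 1) t - g x t))
        = 0 := by
  obtain ⟨hν0, hν1⟩ := hν
  have hμ0 : 0 < μ := by rw [hμ]; linarith
  have hderiv : ∀ (x : ℕ) (t : ℝ), deriv (g x) t = -α * g x t := by
    intro x t
    set I := ∫ u in Set.Ioo (0:ℝ) 1,
      (1 - u) ^ x * (1 + (ν / μ) * u) ^ (N - x) * u ^ (α - 1) with hI
    set J := ∫ u in Set.Ioo (0:ℝ) 1,
      (1 - u) ^ (N - x) * (1 + (μ / ν) * u) ^ x * u ^ (α - 1) with hJ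
    have hgx : g x = fun s => (d * I + b * J) * Real.exp (-α * s) := by
      funext s; rw [hg]; ring
    have h1 : HasDerivAt (fun s : ℝ => -α * s) (-α) t := by
      simpa using (hasDerivAt_id t).const_mul (-α)
    have hexp : HasDerivAt (fun s : ℝ => Real.exp (-α * s)) (Real.exp (-α * t) * -α) t :=
      h1.exp
    have h2 : HasDerivAt (g x) ((d * I + b * J) * (Real.exp (-α * t) * -α)) t := by
      rw [hgx]; exact hexp.const_mul _
    rw [h2.deriv, hg]
    ring
  intro x hx1 hxC t
  rw [hderiv]
  obtain ⟨a, rfl⟩ : ∃ a, x = a + 1 := ⟨x - 1, by omega⟩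
  obtain ⟨m, rfl⟩ : ∃ m, N = a + m + 2 := ⟨N - a - 2, by omega⟩
  have hc1 : μ * (1 + ν / μ) = 1 := by field_simp; linarith
  have hc2 : ν = (ν / μ) * μ := by field_simp
  have hc1' : ν * (1 + μ / ν) = 1 := by field_simp; linarith
  have hc2' : μ = (μ / ν) * ν := by field_simp
  have genI := gen_rel a m (ν/μ) α μ ν hα hc1 hc2
  have genJ := gen_rel m a (μ/ν) α ν μ hα hc1' hc2'
  simp only [hg]
  simp only [Nat.add_sub_cancel, show a+m+2-(a+1) = m+1 from by omega,
    show a+m+2-a = m+2 from by omega, show a+1+1 = a+2 from rfl,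
    show a+m+2-(a+2) = m from by omega]
  simp only [Aint, Bint] at genI genJ
  rcases lt_or_ge (a+1) C with hlt | hge
  · rw [if_pos hlt]
    push_cast
    linear_combination (Real.exp (-α * t) * d) * genI + (Real.exp (-α * t) * b) * genJ
  · have hCeq : C = a + 1 := le_antisymm hge hxC
    subst hCeq
    rw [if_neg (lt_irrefl _)]
    have dI := diff_up (ν/μ) α hα (a+1) m
    have dJ := diff_up (μ/ν) α hα m (a+1)
    simp only [Aint, Bint] at dI dJ
    rw [show a+m+2-(a+1)-1 = m from by omega] at hb hd
    set BI := ∫ (u : ℝ) in Set.Ioo (0:ℝ) 1, (1 - u) ^ (a + 1) * (1 + ν / μ * u) ^ m * u ^ α with hBI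
    set BJ := ∫ (u : ℝ) in Set.Ioo (0:ℝ) 1, (1 - u) ^ m * (1 + μ / ν * u) ^ (a + 1) * u ^ α with hBJ
    push_cast
    linear_combination (Real.exp (-α * t) * d) * genI + (Real.exp (-α * t) * b) * genJ
      + (Real.exp (-α * t) * ν * ((m:ℝ)+1) * d) * dI
      - (Real.exp (-α * t) * ν * ((m:ℝ)+1) * b) * dJ
      + (Real.exp (-α * t) * ν * ((m:ℝ)+1) * (1 + ν/μ) * BI) * hd
      - (Real.exp (-α * t) * ν * ((m:ℝ)+1) * (1 + μ/ν) * BJ) * hb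
      + (Real.exp (-α * t) * ν * ((m:ℝ)+1) * BI * BJ) * hc1
      - (Real.exp (-α * t) * ν * ((m:ℝ)+1) * BI * BJ) * hc1'
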